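/- A rooted binary tree with n leaves has minimal Sackin index if and only if its height equals k = ⌈log₂ n⌉ and it has exactly n − 2^{k−1} cherries of depth k. -/

import Mathlib

/-- Rooted binary trees: a single node (leaf) or a root with two subtrees. -/
inductive BTree : Type
  | leaf : BTree
  | node : BTree → BTree → BTree

namespace BTree

/-- Number of leaves of a rooted binary tree. -/
def leaves : BTree → ℕ
  | leaf => 1
  | node l r => l.leaves + r.leaves

/-- Sum of depths of all leaves, where the root of the tree is at depth `d`. -/
def sackinAux : BTree → ℕ → ℕ
  | leaf, d => d
  | node l r, d => sackinAux l (d + 1) + sackinAux r (d + 1)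

/-- Sackin index: the sum of the depths of all leaves. -/
def sackin (t : BTree) : ℕ := sackinAux t 0

/-- Sum, over all internal nodes `u`, of the number of leaves below `u`. -/
def internalLeafSum : BTree → ℕ
  | leaf => 0
  | node l r => (l.leaves + r.leaves) + internalLeafSum l + internalLeafSum r

/-- Sum, over all nodes `v`, of the number of leaves below `v`. -/
def allNodesLeafSum : BTree → ℕ
  | leaf => 1
  | node l r => (l.leaves + r.leaves) + allNodesLeafSum l + allNodesLeafSum r

/-- Sum, over all non-root nodes `v`, of the number of leaves below `v`. -/
def nonRootLeafSum : BTree → ℕ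
  | leaf => 0
  | node l r => allNodesLeafSum l + allNodesLeafSum r

/-- Height: maximal number of edges on a root-to-leaf path. -/
def height : BTree → ℕ
  | leaf => 0
  | node l r => max l.height r.height + 1

/-- Subtree at a given path from the root (`false` = left child, `true` = right child). -/
def subtreeAt : BTree → List Bool → Option BTree
  | t, [] => some t
  | leaf, _ :: _ => none
  | node l _, false :: p => subtreeAt l p
  | node _ r, true :: p => subtreeAt r p

/-- Number of cherries (pairs of sibling leaves) whose two leaves are at depth `d`. -/
def cherriesAt : BTree → ℕ → ℕ
  | leaf, _ => 0
  | node leaf leaf, d => if d = 1 then 1 else 0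
  | node _ _, 0 => 0
  | node l r, d + 1 => cherriesAt l d + cherriesAt r d

/-- `DeleteCherry t d t'` : `t'` is obtained from `t` by deleting a cherry `[u,v]`
(both leaves at depth `d`) together with the two pendant edges, turning the
parent `w` into a leaf. -/
inductive DeleteCherry : BTree → ℕ → BTree → Prop
  | base : DeleteCherry (BTree.node BTree.leaf BTree.leaf) 1 BTree.leaf
  | left {l l' r : BTree} {d : ℕ} :
      DeleteCherry l d l' → DeleteCherry (BTree.node l r) (d + 1) (BTree.node l' r)
  | right {l r r' : BTree} {d : ℕ} :
      DeleteCherry r d r' → DeleteCherry (BTree.node l r) (d + 1) (BTree.node l r')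

/-- Caterpillar tree with `n` leaves (for `n ≥ 1`): the unique rooted binary tree
with exactly one cherry. -/
def caterpillar : ℕ → BTree
  | 0 => BTree.leaf
  | 1 => BTree.leaf
  | n + 2 => BTree.node (caterpillar (n + 1)) BTree.leaf

/-- Fully balanced tree of height `k`, with `2^k` leaves all at depth `k`. -/
def balanced : ℕ → BTree
  | 0 => BTree.leaf
  | k + 1 => BTree.node (balanced k) (balanced k)

/-- Isomorphism of rooted binary trees (children are unordered). -/
inductive Iso : BTree → BTree → Prop
  | leaf : Iso BTree.leaf BTree.leaf
  | node {a b c d : BTree} : Iso a c → Iso b d → Iso (BTree.node a b) (BTree.node c d)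
  | swap {a b c d : BTree} : Iso a d → Iso b c → Iso (BTree.node a b) (BTree.node c d)

end BTree

open BTree

namespace BTree

theorem leaves_pos (t : BTree) : 1 ≤ t.leaves := by
  induction t with
  | leaf => simp [leaves]
  | node l r ihl ihr => simp only [leaves]; omega

theorem leaves_eq_one {t : BTree} (h : t.leaves = 1) : t = leaf := by
  cases t with
  | leaf => rfl
  | node l r =>
    have := leaves_pos l; have := leaves_pos r
    simp only [leaves] at h; omega

theorem height_eq_zero {t : BTree} (h : t.height = 0) : t = leaf := by
  cases t with
  | leaf => rfl
  | node l r => simp [height] at h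

theorem sackinAux_eq (t : BTree) (d : ℕ) : sackinAux t d = sackin t + d * t.leaves := by
  induction t generalizing d with
  | leaf => simp [sackinAux, sackin, leaves]
  | node l r ihl ihr =>
    show sackinAux l (d+1) + sackinAux r (d+1) = sackinAux (node l r) 0 + d * (l.leaves + r.leaves)
    show sackinAux l (d+1) + sackinAux r (d+1)
        = (sackinAux l 1 + sackinAux r 1) + d * (l.leaves + r.leaves)
    rw [ihl (d+1), ihr (d+1), ihl 1, ihr 1, sackin, sackin]
    ring

theorem sackin_node (l r : BTree) :
    sackin (node l r) = (sackin l + l.leaves) + (sackin r + r.leaves) := by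
  show sackinAux l 1 + sackinAux r 1 = _
  rw [sackinAux_eq, sackinAux_eq]; ring

theorem leaves_le_pow (t : BTree) : t.leaves ≤ 2 ^ t.height := by
  induction t with
  | leaf => simp [leaves, height]
  | node l r ihl ihr =>
    have h1 : 2 ^ l.height ≤ 2 ^ max l.height r.height :=
      Nat.pow_le_pow_right (by norm_num) (le_max_left _ _)
    have h2 : 2 ^ r.height ≤ 2 ^ max l.height r.height :=
      Nat.pow_le_pow_right (by norm_num) (le_max_right _ _)
    show l.leaves + r.leaves ≤ 2 ^ (max l.height r.height + 1)
    rw [pow_succ]; omega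

theorem cherriesAt_node {l r : BTree} (h : l ≠ leaf ∨ r ≠ leaf) (d : ℕ) :
    cherriesAt (node l r) (d + 1) = cherriesAt l d + cherriesAt r d := by
  cases l with
  | leaf =>
    cases r with
    | leaf => simp at h
    | node a b => rfl
  | node a b =>
    cases r with
    | leaf => rfl
    | node c e => rfl

theorem cherriesAt_of_lt {t : BTree} : ∀ d, t.height < d → cherriesAt t d = 0 := by
  induction t with
  | leaf => intro d _; rfl
  | node l r ihl ihr =>
    intro d hd
    have h1 : 1 ≤ max l.height r.height + 1 := by omega
    have hd' : max l.height r.height + 1 < d := hd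
    obtain ⟨e, rfl⟩ : ∃ e, d = e + 1 := ⟨d - 1, by omega⟩
    cases l with
    | leaf =>
      cases r with
      | leaf =>
        simp [height] at hd'
        have he : e + 1 ≠ 1 := by omega
        simp [cherriesAt, he]
        omega
      | node a b =>
        rw [cherriesAt_node (by simp) e, ihl e (by simp [height] at hd' ⊢; omega),
          ihr e (by simp [height] at hd' ⊢; omega)]
    | node a b =>
      rw [cherriesAt_node (by simp) e, ihl e (by simp [height] at hd' ⊢; omega),
        ihr e (by simp [height] at hd' ⊢; omega)]

/-- minimal depth of a leaf -/
def minDepth : BTree → ℕ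
  | leaf => 0
  | node l r => min (minDepth l) (minDepth r) + 1

theorem minDepth_le_height (t : BTree) : minDepth t ≤ height t := by
  induction t with
  | leaf => simp [minDepth, height]
  | node l r ihl ihr => simp only [minDepth, height]; omega

/-- perfect trees by leaf count -/
theorem perfect_sackin : ∀ t : BTree, t.leaves = 2 ^ t.height → t.sackin = t.height * t.leaves := by
  intro t
  induction t with
  | leaf => intro _; rfl
  | node l r ihl ihr =>
    intro hn
    simp only [leaves, height] at hn ⊢
    have hl2 := leaves_le_pow l
    have hr2 := leaves_le_pow r
    have h1 : 2 ^ l.height ≤ 2 ^ max l.height r.height :=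
      Nat.pow_le_pow_right (by norm_num) (le_max_left _ _)
    have h2 : 2 ^ r.height ≤ 2 ^ max l.height r.height :=
      Nat.pow_le_pow_right (by norm_num) (le_max_right _ _)
    rw [pow_succ] at hn
    have hnl : l.leaves = 2 ^ max l.height r.height := by omega
    have hnr : r.leaves = 2 ^ max l.height r.height := by omega
    have hhl : l.height = max l.height r.height := by
      have : 2 ^ max l.height r.height ≤ 2 ^ l.height := by omega
      have := (Nat.pow_le_pow_iff_right (by norm_num : 1 < 2)).mp this
      omega
    have hhr : r.height = max l.height r.height := by
      have : 2 ^ max l.height r.height ≤ 2 ^ r.height := by omega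
      have := (Nat.pow_le_pow_iff_right (by norm_num : 1 < 2)).mp this
      omega
    have he : r.height = l.height := by omega
    rw [he, Nat.max_self] at hn ⊢
    rw [he] at hr2
    rw [sackin_node, ihl (by omega), ihr (by rw [he]; omega), he]
    ring

/-- perfect trees by minDepth = height -/
theorem perfect_of_minDepth : ∀ t : BTree, minDepth t = height t → t.leaves = 2 ^ t.height := by
  intro t
  induction t with
  | leaf => intro _; rfl
  | node l r ihl ihr =>
    intro h
    simp only [minDepth, height] at h ⊢
    have h1 := minDepth_le_height l
    have h2 := minDepth_le_height r
    have hl : minDepth l = l.height := by omega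
    have hr : minDepth r = r.height := by omega
    have hlr : l.height = max l.height r.height := by omega
    have hrr : r.height = max l.height r.height := by omega
    have he : r.height = l.height := by omega
    rw [he, Nat.max_self]
    show l.leaves + r.leaves = 2 ^ (l.height + 1)
    rw [ihl hl, ihr hr, he, pow_succ]
    omega

/-- split a minimum-depth leaf into a cherry -/
def growMin : BTree → BTree
  | leaf => node leaf leaf
  | node l r =>
    if minDepth l ≤ minDepth r then node (growMin l) r else node l (growMin r)

theorem growMin_leaves : ∀ t : BTree, (growMin t).leaves = t.leaves + 1 := by
  intro t
  induction t with
  | leaf => rfl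
  | node l r ihl ihr =>
    simp only [growMin]
    split
    · simp only [leaves, ihl]; omega
    · simp only [leaves, ihr]; omega

theorem growMin_sackin : ∀ t : BTree, (growMin t).sackin = t.sackin + minDepth t + 2 := by
  intro t
  induction t with
  | leaf => rfl
  | node l r ihl ihr =>
    simp only [growMin]
    split
    · next hle =>
      rw [sackin_node, ihl, growMin_leaves, sackin_node]
      simp only [minDepth]
      omega
    · next hle =>
      rw [sackin_node, ihr, growMin_leaves, sackin_node]
      simp only [minDepth]
      omega

/-- delete a deepest cherry -/
def shrinkMax : BTree → BTree
  | leaf => leaf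
  | node leaf leaf => leaf
  | node leaf (node a b) => node leaf (shrinkMax (node a b))
  | node (node a b) leaf => node (shrinkMax (node a b)) leaf
  | node (node a b) (node c d) =>
      if height (node c d) ≤ height (node a b) then
        node (shrinkMax (node a b)) (node c d)
      else node (node a b) (shrinkMax (node c d))

theorem height_node_pos (l r : BTree) : 1 ≤ (node l r).height := by
  simp [height]

theorem shrink_leaves : ∀ t : BTree, 1 ≤ t.height → (shrinkMax t).leaves + 1 = t.leaves := by
  intro t
  induction t with
  | leaf => intro h; simp [height] at h
  | node l r ihl ihr =>
    intro _
    cases l with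
    | leaf =>
      cases r with
      | leaf => rfl
      | node a b =>
        have := ihr (height_node_pos a b)
        show (node leaf (shrinkMax (node a b))).leaves + 1 = _
        simp only [leaves] at this ⊢
        omega
    | node a b =>
      cases r with
      | leaf =>
        have := ihl (height_node_pos a b)
        show (node (shrinkMax (node a b)) leaf).leaves + 1 = _
        simp only [leaves] at this ⊢
        omega
      | node c d =>
        simp only [shrinkMax]
        split
        · have := ihl (height_node_pos a b)
          simp only [leaves] at this ⊢
          omega
        · have := ihr (height_node_pos c d)
          simp only [leaves] at this ⊢
          omega

theorem shrink_sackin : ∀ t : BTree, 1 ≤ t.height →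
    (shrinkMax t).sackin + t.height + 1 = t.sackin := by
  intro t
  induction t with
  | leaf => intro h; simp [height] at h
  | node l r ihl ihr =>
    intro _
    have hsl : (leaf : BTree).sackin = 0 := rfl
    have hll : (leaf : BTree).leaves = 1 := rfl
    cases l with
    | leaf =>
      cases r with
      | leaf => rfl
      | node a b =>
        have h1 := ihr (height_node_pos a b)
        have h2 := shrink_leaves (node a b) (height_node_pos a b)
        show (node leaf (shrinkMax (node a b))).sackin + (node leaf (node a b)).height + 1 = _
        simp only [sackin_node, height, leaves] at h1 h2 ⊢
        omega
    | node a b =>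
      cases r with
      | leaf =>
        have h1 := ihl (height_node_pos a b)
        have h2 := shrink_leaves (node a b) (height_node_pos a b)
        show (node (shrinkMax (node a b)) leaf).sackin + (node (node a b) leaf).height + 1 = _
        simp only [sackin_node, height, leaves] at h1 h2 ⊢
        omega
      | node c d =>
        simp only [shrinkMax]
        split
        · next hle =>
          have h1 := ihl (height_node_pos a b)
          have h2 := shrink_leaves (node a b) (height_node_pos a b)
          simp only [sackin_node, height, leaves] at h1 h2 hle ⊢
          omega
        · next hle =>
          have h1 := ihr (height_node_pos c d)
          have h2 := shrink_leaves (node c d) (height_node_pos c d)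
          simp only [sackin_node, height, leaves] at h1 h2 hle ⊢
          omega

theorem shrink_minDepth : ∀ t : BTree, 1 ≤ t.height →
    minDepth (shrinkMax t) ≤ minDepth t := by
  intro t
  induction t with
  | leaf => intro h; simp [height] at h
  | node l r ihl ihr =>
    intro _
    cases l with
    | leaf =>
      cases r with
      | leaf => simp [shrinkMax, minDepth]
      | node a b =>
        have := ihr (height_node_pos a b)
        show minDepth (node leaf (shrinkMax (node a b))) ≤ _
        simp only [minDepth] at this ⊢
        omega
    | node a b =>
      cases r with
      | leaf =>
        have := ihl (height_node_pos a b)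
        show minDepth (node (shrinkMax (node a b)) leaf) ≤ _
        simp only [minDepth] at this ⊢
        omega
      | node c d =>
        simp only [shrinkMax]
        split
        · have := ihl (height_node_pos a b)
          simp only [minDepth] at this ⊢
          omega
        · have := ihr (height_node_pos c d)
          simp only [minDepth] at this ⊢
          omega

theorem exchange (t : BTree) (h : minDepth t + 2 ≤ t.height) :
    (growMin (shrinkMax t)).leaves = t.leaves ∧
      (growMin (shrinkMax t)).sackin < t.sackin := by
  have h1 : 1 ≤ t.height := by omega
  have e1 := shrink_leaves t h1
  have e2 := shrink_sackin t h1
  have e3 := shrink_minDepth t h1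
  have e4 := growMin_leaves (shrinkMax t)
  have e5 := growMin_sackin (shrinkMax t)
  omega

theorem child_bound (x : BTree) (e : ℕ) (he : 1 ≤ e) (hx : x.height ≤ e)
    (IH : 1 ≤ x.height →
      2 * x.leaves ≤ 2 ^ x.height + 2 * cherriesAt x x.height ∧
      (2 * x.leaves = 2 ^ x.height + 2 * cherriesAt x x.height →
        x.sackin + 2 ^ x.height = x.leaves * (x.height + 1))) :
    2 * x.leaves ≤ 2 ^ e + 2 * cherriesAt x e ∧
    (2 * x.leaves = 2 ^ e + 2 * cherriesAt x e →
      x.sackin + x.leaves + 2 ^ e = x.leaves * (e + 2)) := by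
  rcases Nat.lt_or_ge x.height e with hlt | hge
  · -- strictly lower child
    have hc0 := cherriesAt_of_lt (t := x) e hlt
    have hle := leaves_le_pow x
    have hmono : 2 ^ x.height ≤ 2 ^ (e - 1) :=
      Nat.pow_le_pow_right (by norm_num) (by omega)
    have h2 : 2 ^ e = 2 ^ (e - 1) * 2 := by
      rw [← pow_succ]; congr 1; omega
    constructor
    · omega
    · intro heq
      have hn : x.leaves = 2 ^ (e - 1) := by omega
      have hh : e - 1 ≤ x.height := by
        have : 2 ^ (e - 1) ≤ 2 ^ x.height := by omega
        exact (Nat.pow_le_pow_iff_right (by norm_num : 1 < 2)).mp this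
      have hhe : x.height = e - 1 := by omega
      have hp : x.leaves = 2 ^ x.height := by rw [hhe]; exact hn
      have hs := perfect_sackin x hp
      have hprod : x.leaves * (e + 2) = x.height * x.leaves + x.leaves + 2 * x.leaves := by
        rw [hhe]; have h3 : e - 1 + 3 = e + 2 := by omega
        calc x.leaves * (e + 2) = x.leaves * (e - 1 + 3) := by rw [h3]
        _ = (e-1) * x.leaves + x.leaves + 2 * x.leaves := by ring
      have h2n : 2 ^ e = 2 * x.leaves := by omega
      rw [hs, hprod, h2n]
  · have heq : x.height = e := by omega
    rw [← heq]
    obtain ⟨b1, b2⟩ := IH (by omega)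
    refine ⟨b1, fun hq => ?_⟩
    have := b2 hq
    have hprod : x.leaves * (x.height + 2) = x.leaves * (x.height + 1) + x.leaves := by ring
    omega

theorem countBound : ∀ t : BTree, 1 ≤ t.height →
    2 * t.leaves ≤ 2 ^ t.height + 2 * cherriesAt t t.height ∧
    (2 * t.leaves = 2 ^ t.height + 2 * cherriesAt t t.height →
      t.sackin + 2 ^ t.height = t.leaves * (t.height + 1)) := by
  intro t
  induction t with
  | leaf => intro h; simp [height] at h
  | node l r ihl ihr =>
    intro _
    by_cases hb : l = leaf ∧ r = leaf
    · obtain ⟨rfl, rfl⟩ := hb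
      constructor
      · show 2 * (node leaf leaf).leaves ≤ 2 ^ (node leaf leaf).height + 2 * cherriesAt (node leaf leaf) (node leaf leaf).height
        norm_num [leaves, height, cherriesAt]
      · intro _
        show (node leaf leaf).sackin + 2 ^ (node leaf leaf).height = (node leaf leaf).leaves * ((node leaf leaf).height + 1)
        norm_num [leaves, height, sackin, sackinAux]
    · have hne : l ≠ leaf ∨ r ≠ leaf := by tauto
      have he1 : 1 ≤ max l.height r.height := by
        rcases hne with h | h
        · cases l with
          | leaf => exact absurd rfl h
          | node a b => simp only [height]; omega
        · cases r with
          | leaf => exact absurd rfl h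
          | node a b => simp only [height]; omega
      have hcn := cherriesAt_node hne (max l.height r.height)
      have Bl := child_bound l (max l.height r.height) he1 (le_max_left _ _) ihl
      have Br := child_bound r (max l.height r.height) he1 (le_max_right _ _) ihr
      have hpow : 2 ^ (max l.height r.height + 1) = 2 ^ max l.height r.height * 2 := pow_succ 2 _
      have hht : (node l r).height = max l.height r.height + 1 := rfl
      have hlv : (node l r).leaves = l.leaves + r.leaves := rfl
      rw [hht, hlv, hcn]
      constructor
      · have := Bl.1; have := Br.1; omega
      · intro heq
        have eql : 2 * l.leaves = 2 ^ max l.height r.height + 2 * cherriesAt l (max l.height r.height) := by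
          have := Bl.1; have := Br.1; omega
        have eqr : 2 * r.leaves = 2 ^ max l.height r.height + 2 * cherriesAt r (max l.height r.height) := by
          have := Bl.1; omega
        have El := Bl.2 eql
        have Er := Br.2 eqr
        have hprod : (l.leaves + r.leaves) * (max l.height r.height + 1 + 1)
            = l.leaves * (max l.height r.height + 2) + r.leaves * (max l.height r.height + 2) := by
          ring
        rw [sackin_node, hprod]
        linarith [El, Er, hpow]

theorem flat_child (x : BTree) (e : ℕ) (he : 1 ≤ e) (hx : x.height ≤ e)
    (hm : e ≤ x.minDepth + 1)
    (IH : x.height ≤ x.minDepth + 1 → 1 ≤ x.height →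
      2 * x.leaves = 2 ^ x.height + 2 * cherriesAt x x.height ∧
      1 ≤ cherriesAt x x.height) :
    2 * x.leaves = 2 ^ e + 2 * cherriesAt x e ∧
    (x.height = e → 1 ≤ cherriesAt x e) := by
  have hmx := minDepth_le_height x
  rcases Nat.lt_or_ge x.height e with hlt | hge
  · have hme : x.minDepth = x.height := by omega
    have hp := perfect_of_minDepth x hme
    have hh : x.height = e - 1 := by omega
    have hc0 := cherriesAt_of_lt (t := x) e hlt
    have h2 : 2 ^ e = 2 ^ (e - 1) * 2 := by rw [← pow_succ]; congr 1; omega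
    rw [hh] at hp
    constructor
    · rw [hc0]; omega
    · intro h; omega
  · have heq : x.height = e := by omega
    rw [← heq]
    obtain ⟨b1, b2⟩ := IH (by omega) (by omega)
    exact ⟨b1, fun _ => b2⟩

theorem flat_spec : ∀ t : BTree, t.height ≤ t.minDepth + 1 → 1 ≤ t.height →
    2 * t.leaves = 2 ^ t.height + 2 * cherriesAt t t.height ∧
    1 ≤ cherriesAt t t.height := by
  intro t
  induction t with
  | leaf => intro _ h; simp [height] at h
  | node l r ihl ihr =>
    intro hflat _
    by_cases hb : l = leaf ∧ r = leaf
    · obtain ⟨rfl, rfl⟩ := hb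
      constructor
      · show 2 * (node leaf leaf).leaves = 2 ^ (node leaf leaf).height + 2 * cherriesAt (node leaf leaf) (node leaf leaf).height
        norm_num [leaves, height, cherriesAt]
      · show 1 ≤ cherriesAt (node leaf leaf) (node leaf leaf).height
        norm_num [height, cherriesAt]
    · have hne : l ≠ leaf ∨ r ≠ leaf := by tauto
      have he1 : 1 ≤ max l.height r.height := by
        rcases hne with h | h
        · cases l with
          | leaf => exact absurd rfl h
          | node a b => simp only [height]; omega
        · cases r with
          | leaf => exact absurd rfl h
          | node a b => simp only [height]; omega
      have hfl : max l.height r.height ≤ min l.minDepth r.minDepth + 1 := by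
        simp only [height, minDepth] at hflat; omega
      have hcn := cherriesAt_node hne (max l.height r.height)
      have Bl := flat_child l (max l.height r.height) he1 (le_max_left _ _) (by omega) ihl
      have Br := flat_child r (max l.height r.height) he1 (le_max_right _ _) (by omega) ihr
      have hpow : 2 ^ (max l.height r.height + 1) = 2 ^ max l.height r.height * 2 := pow_succ 2 _
      have hht : (node l r).height = max l.height r.height + 1 := rfl
      have hlv : (node l r).leaves = l.leaves + r.leaves := rfl
      rw [hht, hlv, hcn]
      constructor
      · have := Bl.1; have := Br.1; omega
      · have : l.height = max l.height r.height ∨ r.height = max l.height r.height := by omega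
        rcases this with h | h
        · have := Bl.2 h; omega
        · have := Br.2 h; omega

theorem clog_eq' (h n : ℕ) (h1 : 1 ≤ h) (hlt : 2 ^ (h - 1) < n) (hle : n ≤ 2 ^ h) :
    Nat.clog 2 n = h := by
  have a := (Nat.clog_le_iff_le_pow one_lt_two).mpr hle
  have b := (Nat.lt_clog_iff_pow_lt one_lt_two).mpr hlt
  omega

theorem lower_bound : ∀ (s : ℕ) (t : BTree), t.sackin < s →
    t.leaves * (Nat.clog 2 t.leaves + 1) ≤ t.sackin + 2 ^ Nat.clog 2 t.leaves := by
  intro s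
  induction s with
  | zero => intro t ht; omega
  | succ s ih =>
    intro t ht
    by_cases hf : t.height ≤ t.minDepth + 1
    · by_cases h0 : t.height = 0
      · have h1 := height_eq_zero h0
        subst h1
        have hl : (leaf : BTree).leaves = 1 := rfl
        have hs : (leaf : BTree).sackin = 0 := rfl
        rw [hl, hs, Nat.clog_one_right]
        norm_num
      · have h1 : 1 ≤ t.height := by omega
        obtain ⟨hcount, hc1⟩ := flat_spec t hf h1
        have hsack := (countBound t h1).2 hcount
        have hle := leaves_le_pow t
        have hpow : 2 ^ t.height = 2 ^ (t.height - 1) * 2 := by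
          rw [← pow_succ]; congr 1; omega
        have hlt : 2 ^ (t.height - 1) < t.leaves := by omega
        have hk : Nat.clog 2 t.leaves = t.height := clog_eq' t.height t.leaves h1 hlt hle
        rw [hk]
        exact hsack.symm.le
    · obtain ⟨hl, hs⟩ := exchange t (by omega)
      have hb := ih (growMin (shrinkMax t)) (by omega)
      rw [hl] at hb
      exact hb.trans (by omega)

theorem stmt16_aux (t : BTree) :
    (∀ t' : BTree, t'.leaves = t.leaves → t.sackin ≤ t'.sackin) ↔
      (t.height = Nat.clog 2 t.leaves ∧
       cherriesAt t (Nat.clog 2 t.leaves)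
         = t.leaves - 2 ^ (Nat.clog 2 t.leaves - 1)) := by
  constructor
  · intro hmin
    have hflat : t.height ≤ t.minDepth + 1 := by
      by_contra hnf
      obtain ⟨hl, hs⟩ := exchange t (by omega)
      have := hmin _ hl
      omega
    by_cases h0 : t.height = 0
    · have h1 := height_eq_zero h0
      subst h1
      have hl : (leaf : BTree).leaves = 1 := rfl
      rw [hl, Nat.clog_one_right]
      exact ⟨rfl, rfl⟩
    · have h1 : 1 ≤ t.height := by omega
      obtain ⟨hcount, hc1⟩ := flat_spec t hflat h1
      have hle := leaves_le_pow t
      have hpow : 2 ^ t.height = 2 ^ (t.height - 1) * 2 := by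
        rw [← pow_succ]; congr 1; omega
      have hlt : 2 ^ (t.height - 1) < t.leaves := by omega
      have hk : Nat.clog 2 t.leaves = t.height := clog_eq' t.height t.leaves h1 hlt hle
      rw [hk]
      exact ⟨rfl, by omega⟩
  · rintro ⟨hh, hc⟩ t' hleq
    by_cases h0 : t.leaves = 1
    · have h1 := leaves_eq_one h0
      rw [h1]
      show sackinAux leaf 0 ≤ t'.sackin
      show 0 ≤ t'.sackin
      omega
    · have hn2 : 2 ≤ t.leaves := by have := leaves_pos t; omega
      have hk1 : 1 ≤ Nat.clog 2 t.leaves := Nat.clog_pos one_lt_two (by omega)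
      have hlt : 2 ^ (Nat.clog 2 t.leaves - 1) < t.leaves :=
        (Nat.lt_clog_iff_pow_lt one_lt_two).mp (by omega)
      have h1 : 1 ≤ t.height := by omega
      have hpow : 2 ^ Nat.clog 2 t.leaves = 2 ^ (Nat.clog 2 t.leaves - 1) * 2 := by
        rw [← pow_succ]; congr 1; omega
      have hcount : 2 * t.leaves = 2 ^ t.height + 2 * cherriesAt t t.height := by
        rw [hh]; omega
      have hsack := (countBound t h1).2 hcount
      have hlb := lower_bound (t'.sackin + 1) t' (by omega)
      rw [hleq] at hlb
      rw [hh] at hsack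
      linarith [hsack, hlb]

end BTree

/-- a rooted binary tree with `n` leaves has minimal Sackin index
iff its height equals `k = ⌈log₂ n⌉` and it has exactly `n − 2^{k−1}` cherries
of depth `k`. -/
theorem stmt16 (t : BTree) :
    (∀ t' : BTree, t'.leaves = t.leaves → t.sackin ≤ t'.sackin) ↔
      (t.height = Nat.clog 2 t.leaves ∧
       cherriesAt t (Nat.clog 2 t.leaves)
         = t.leaves - 2 ^ (Nat.clog 2 t.leaves - 1)) := BTree.stmt16_aux t
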